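/- Every vertex of T has at most 6 neighbours; that is, the maximum degree of a minimum spanning tree of a finite planar Euclidean point set is at most 6. -/

import Mathlib

/-- A rooted tree on a vertex type `V`, given by a parent function under which
every vertex reaches the root. -/
structure ParentTree (V : Type) where
  root : V
  parent : V → V
  parent_root : parent root = root
  reaches_root : ∀ v, ∃ k, parent^[k] v = root

namespace ParentTree

variable {V : Type}

/-- The set `C(u)` of children of `u`. -/
def children (T : ParentTree V) (u : V) : Set V := {v | T.parent v = u ∧ v ≠ u}

/-- The set `T(u)` of descendants of `u` (including `u` itself). -/
def desc (T : ParentTree V) (u : V) : Set V := {b | ∃ k, T.parent^[k] b = u}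

/-- For a set `U` of siblings, `T(U) = ⋃_{u ∈ U} T(u)`. -/
def descU (T : ParentTree V) (U : Set V) : Set V := ⋃ u ∈ U, T.desc u

end ParentTree

/-- The total weight of the tree `T`: the sum of distances over its edges. -/
noncomputable def treeWeight {V X : Type} [Fintype V] [DecidableEq V] [MetricSpace X]
    (T : ParentTree V) (f : V → X) : ℝ :=
  ∑ v ∈ Finset.univ.filter (fun v => v ≠ T.root), dist (f v) (f (T.parent v))

/-- `T` is a minimum spanning tree: among all trees with the same vertex set it
minimizes the sum of distances over its edges. -/
def IsMST {V X : Type} [Fintype V] [DecidableEq V] [MetricSpace X]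
    (T : ParentTree V) (f : V → X) : Prop :=
  ∀ T' : ParentTree V, treeWeight T f ≤ treeWeight T' f

/-- `a` and `v` are neighbours in `T`, i.e. joined by an edge of `T`. -/
def Nbr {V : Type} (T : ParentTree V) (a v : V) : Prop :=
  a ≠ v ∧ (T.parent a = v ∨ T.parent v = a)

namespace ParentTree
variable {V : Type}

lemma eq_root_of_cycle (T : ParentTree V) {w : V} {k : ℕ} (hk : 0 < k)
    (hcyc : T.parent^[k] w = w) : w = T.root := by
  obtain ⟨m, hm⟩ := T.reaches_root w
  have hiter : ∀ j, T.parent^[k * j] w = w := by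
    intro j
    induction j with
    | zero => simp
    | succ j ih =>
      rw [Nat.mul_succ, Function.iterate_add_apply, hcyc, ih]
  have hge : m ≤ k * m := Nat.le_mul_of_pos_left m hk
  calc w = T.parent^[k * m] w := (hiter m).symm
    _ = T.parent^[k * m - m] (T.parent^[m] w) := by
        rw [← Function.iterate_add_apply, Nat.sub_add_cancel hge]
    _ = T.root := by rw [hm, Function.iterate_fixed T.parent_root]

lemma eq_root_of_fix (T : ParentTree V) {w : V} (h : T.parent w = w) : w = T.root :=
  T.eq_root_of_cycle Nat.one_pos (by simpa using h)

lemma iterate_update_eq [DecidableEq V] (p : V → V) (a b : V) :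
    ∀ (k : ℕ) (w : V), (∀ i < k, p^[i] w ≠ a) → (Function.update p a b)^[k] w = p^[k] w := by
  intro k
  induction k with
  | zero => intro w _; rfl
  | succ k ih =>
    intro w hw
    rw [Function.iterate_succ_apply, Function.iterate_succ_apply]
    have hw0 : w ≠ a := by simpa using hw 0 (Nat.succ_pos k)
    rw [Function.update_of_ne hw0]
    refine ih (p w) fun i hi => ?_
    have := hw (i + 1) (Nat.succ_lt_succ hi)
    simpa [Function.iterate_succ_apply] using this

variable [DecidableEq V]

/-- Replacing the parent of `a` by `b` (removing edge `a—parent a` and adding `a—b`),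
valid when `a` is not the root and `b` is not a descendant of `a`. -/
def swap (T : ParentTree V) (a b : V) (ha : T.parent a ≠ a)
    (hb : ∀ k, T.parent^[k] b ≠ a) : ParentTree V where
  root := T.root
  parent := Function.update T.parent a b
  parent_root := by
    have hra : T.root ≠ a := fun h => ha (by rw [← h]; exact T.parent_root)
    rw [Function.update_of_ne hra, T.parent_root]
  reaches_root := by
    intro w
    set p := T.parent with hp
    by_cases hdesc : ∃ k, p^[k] w = a
    · obtain ⟨m, hm⟩ := T.reaches_root b
      have hbm : (Function.update p a b)^[m] b = T.root := by
        rw [iterate_update_eq p a b m b (fun i _ => hb i), hm]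
      set k := Nat.find hdesc with hk
      have hka : (Function.update p a b)^[k] w = a := by
        rw [iterate_update_eq p a b k w (fun i hi => Nat.find_min hdesc hi)]
        exact Nat.find_spec hdesc
      refine ⟨m + (k + 1), ?_⟩
      rw [Function.iterate_add_apply, Function.iterate_succ_apply', hka,
        Function.update_self, hbm]
    · push_neg at hdesc
      obtain ⟨m, hm⟩ := T.reaches_root w
      exact ⟨m, by rw [iterate_update_eq p a b m w (fun i _ => hdesc i), hm]⟩

end ParentTree

section Weight
variable {V X : Type} [Fintype V] [DecidableEq V] [MetricSpace X]

lemma treeWeight_swap (T : ParentTree V) (f : V → X) (a b : V) (ha : T.parent a ≠ a)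
    (hb : ∀ k, T.parent^[k] b ≠ a) :
    treeWeight (T.swap a b ha hb) f + dist (f a) (f (T.parent a))
      = treeWeight T f + dist (f a) (f b) := by
  have hroot : (T.swap a b ha hb).root = T.root := rfl
  have hamem : a ∈ Finset.univ.filter (fun v => v ≠ T.root) := by
    simp only [Finset.mem_filter, Finset.mem_univ, true_and]
    exact fun h => ha (by rw [h]; exact T.parent_root)
  unfold treeWeight
  rw [hroot]
  rw [← Finset.add_sum_erase _ _ hamem, ← Finset.add_sum_erase _ _ hamem]
  have hsp : (T.swap a b ha hb).parent = Function.update T.parent a b := rfl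
  have h1 : (T.swap a b ha hb).parent a = b := by rw [hsp, Function.update_self]
  have h2 : ∀ w ∈ (Finset.univ.filter (fun v => v ≠ T.root)).erase a,
      dist (f w) (f ((T.swap a b ha hb).parent w)) = dist (f w) (f (T.parent w)) := by
    intro w hw
    have : w ≠ a := Finset.ne_of_mem_erase hw
    rw [hsp, Function.update_of_ne this]
  rw [h1, Finset.sum_congr rfl h2]
  ring

lemma mst_le (f : V → X) (T : ParentTree V) (hmst : IsMST T f) {a b v : V}
    (hav : Nbr T a v) (hbv : Nbr T b v) (hab : a ≠ b) :
    dist (f a) (f v) ≤ dist (f a) (f b) := by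
  obtain ⟨hane, h1 | h1⟩ := hav
  · -- T.parent a = v : single swap
    have ha : T.parent a ≠ a := by rw [h1]; exact fun h => hane h.symm
    have hb : ∀ k, T.parent^[k] b ≠ a := by
      intro k hk
      rcases Nat.eq_zero_or_pos k with rfl | hkpos
      · simp only [Function.iterate_zero, id_eq] at hk
        exact hab hk.symm
      obtain ⟨hbne, h2 | h2⟩ := hbv
      · -- parent b = v
        have hcyc : T.parent^[k] v = v := by
          have e : T.parent^[k] (T.parent b) = T.parent (T.parent^[k] b) :=
            (Function.iterate_succ_apply T.parent k b).symm.trans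
              (Function.iterate_succ_apply' T.parent k b)
          rw [h2, hk, h1] at e
          exact e
        have hvroot : v = T.root := T.eq_root_of_cycle hkpos hcyc
        -- then T.parent^[k] b = root, so a = root = v, contradiction
        obtain ⟨k', rfl⟩ : ∃ k', k = k' + 1 := ⟨k - 1, by omega⟩
        have hbr : T.parent^[k' + 1] b = T.root := by
          rw [Function.iterate_succ_apply, h2, hvroot,
            Function.iterate_fixed T.parent_root]
        exact hane ((hk.symm.trans hbr).trans hvroot.symm)
      · -- parent v = b : cycle at b of length k+2
        have hcyc : T.parent^[k + 2] b = b := by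
          have e1 : T.parent^[k + 1] b = v := by
            rw [Function.iterate_succ_apply']
            rw [hk, h1]
          calc T.parent^[k + 2] b = T.parent (T.parent^[k + 1] b) :=
                Function.iterate_succ_apply' _ _ _
            _ = b := by rw [e1, h2]
        have : b = T.root := T.eq_root_of_cycle (by omega) hcyc
        have hfix : T.parent b = b := by rw [this]; exact T.parent_root
        rw [Function.iterate_fixed hfix] at hk
        exact hab hk.symm
    have key := treeWeight_swap T f a b ha hb
    have := hmst (T.swap a b ha hb)
    rw [h1] at key
    linarith
  · -- T.parent v = a
    obtain ⟨hbne, h2 | h2⟩ := hbv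
    · -- parent b = v : double swap
      have hvne : v ≠ T.root := by
        intro h
        apply hane
        calc a = T.parent v := h1.symm
          _ = v := by rw [h, T.parent_root]
      have hb1 : T.parent b ≠ b := by rw [h2]; exact Ne.symm hbne
      have hba : ∀ k, T.parent^[k] a ≠ b := by
        intro k hk
        have hcyc : T.parent^[k + 2] v = v := by
          have e1 : T.parent^[k + 1] v = b := by
            rw [Function.iterate_succ_apply, h1, hk]
          calc T.parent^[k + 2] v = T.parent (T.parent^[k + 1] v) :=
                Function.iterate_succ_apply' _ _ _
            _ = v := by rw [e1, h2]
        have := T.eq_root_of_cycle (by omega) hcyc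
        exact hvne this
      set T1 := T.swap b a hb1 hba with hT1
      have hT1p : T1.parent = Function.update T.parent b a := rfl
      have hT1r : T1.root = T.root := rfl
      have hw1 : treeWeight T1 f + dist (f b) (f v) = treeWeight T f + dist (f b) (f a) := by
        have := treeWeight_swap T f b a hb1 hba
        rw [h2] at this
        exact this
      -- second swap : change parent of v from a to b
      have hvb : v ≠ b := fun h => hbne h.symm
      have hT1v : T1.parent v = a := by rw [hT1p, Function.update_of_ne hvb, h1]
      have hv1 : T1.parent v ≠ v := by rw [hT1v]; exact hane
      have hb2 : ∀ k, T1.parent^[k] b ≠ v := by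
        intro k hk
        rcases Nat.eq_zero_or_pos k with rfl | hkpos
        · exact hbne (by simpa using hk)
        -- cycle at v in T1
        obtain ⟨k', rfl⟩ : ∃ k', k = k' + 1 := ⟨k - 1, by omega⟩
        have hpb : T1.parent b = a := by rw [hT1p, Function.update_self]
        have hk' : T1.parent^[k'] a = v := by
          rw [← hk, Function.iterate_succ_apply, hpb]
        have hcyc : T1.parent^[k' + 1] v = v := by
          rw [Function.iterate_succ_apply, hT1v, hk']
        have := T1.eq_root_of_cycle (Nat.succ_pos k') hcyc
        rw [hT1r] at this
        exact hvne this
      set T2 := T1.swap v b hv1 hb2 with hT2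
      have hw2 : treeWeight T2 f + dist (f v) (f a) = treeWeight T1 f + dist (f v) (f b) := by
        have := treeWeight_swap T1 f v b hv1 hb2
        rw [hT1v] at this
        exact this
      have := hmst T2
      have d1 := dist_comm (f b) (f a)
      have d2 := dist_comm (f b) (f v)
      have d3 := dist_comm (f v) (f a)
      linarith
    · exact absurd (h1.symm.trans h2) hab


open Complex in
lemma re_mul_conj (z w : ℂ) :
    (z * (starRingEnd ℂ) w).re = ‖z‖ * ‖w‖ * Real.cos (z.arg - w.arg) := by
  nth_rewrite 1 [← Complex.norm_mul_exp_arg_mul_I z]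
  nth_rewrite 1 [← Complex.norm_mul_exp_arg_mul_I w]
  rw [map_mul, ← Complex.exp_conj, map_mul, Complex.conj_ofReal, Complex.conj_I]
  rw [mul_mul_mul_comm, ← Complex.exp_add]
  have harg : (↑z.arg * I + (starRingEnd ℂ) ↑w.arg * -I) = ↑(z.arg - w.arg) * I := by
    rw [Complex.conj_ofReal]; push_cast; ring
  rw [harg, Complex.exp_mul_I]
  simp only [Complex.mul_re, Complex.mul_im, Complex.ofReal_re, Complex.ofReal_im,
    Complex.add_re, Complex.add_im, Complex.I_re, Complex.I_im,
    Complex.cos_ofReal_re, Complex.cos_ofReal_im, Complex.sin_ofReal_re, Complex.sin_ofReal_im]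
  ring

lemma inner_le_of_dist (z w : ℂ) (h1 : ‖z‖ ≤ ‖z - w‖)
    (h2 : ‖w‖ ≤ ‖z - w‖) :
    2 * (z * (starRingEnd ℂ) w).re ≤ ‖z‖ * ‖w‖ := by
  have hns := Complex.normSq_sub z w
  have e1 : Complex.normSq z = ‖z‖ ^ 2 := (Complex.sq_norm z).symm
  have e2 : Complex.normSq w = ‖w‖ ^ 2 := (Complex.sq_norm w).symm
  have e3 : Complex.normSq (z - w) = ‖z - w‖ ^ 2 := (Complex.sq_norm (z - w)).symm
  rw [e1, e2, e3] at hns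
  rcases le_total (‖z‖) (‖w‖) with h | h
  · nlinarith [norm_nonneg z, norm_nonneg w, norm_nonneg (z - w)]
  · nlinarith [norm_nonneg z, norm_nonneg w, norm_nonneg (z - w)]

lemma cos_gt_half (c : ℝ) (h : |c| < Real.pi / 3) : 1 / 2 < Real.cos c := by
  have hpi := Real.pi_pos
  rw [← Real.cos_abs, ← Real.cos_pi_div_three]
  apply Real.cos_lt_cos_of_nonneg_of_le_pi (abs_nonneg c) (by linarith) h

lemma dist_eq_abs (x y : EuclideanSpace ℝ (Fin 2)) :
    dist x y = ‖(⟨x 0, x 1⟩ : ℂ) - (⟨y 0, y 1⟩ : ℂ)‖ := by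
  rw [EuclideanSpace.dist_eq, Complex.norm_def, Complex.normSq_apply]
  simp only [Fin.sum_univ_two, Complex.sub_re, Complex.sub_im, Real.dist_eq]
  congr 1
  rw [_root_.sq_abs, _root_.sq_abs]
  ring

theorem stmt16 {V : Type} [Fintype V] [DecidableEq V]
    (hn : 3 ≤ Fintype.card V) (f : V → EuclideanSpace ℝ (Fin 2))
    (hf : Function.Injective f)
    (T : ParentTree V) (hmst : IsMST T f) (v : V) :
    {a : V | Nbr T a v}.ncard ≤ 6 := by
  classical
  have hfin : {a : V | Nbr T a v}.Finite := Set.toFinite _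
  rw [Set.ncard_eq_toFinset_card _ hfin]
  set g : V → ℂ := fun w => ⟨f w 0, f w 1⟩ with hg
  have hdist : ∀ u w : V, dist (f u) (f w) = ‖g u - g w‖ := fun u w =>
    dist_eq_abs (f u) (f w)
  set bucket : V → ℤ := fun a => ⌈(((g a - g v).arg + Real.pi) * 3) / Real.pi⌉ with hbucket
  have hpi := Real.pi_pos
  -- each bucket value lies in [1, 6]
  have hmem : ∀ a ∈ hfin.toFinset, bucket a ∈ Finset.Icc (1 : ℤ) 6 := by
    intro a _
    have hlo := Complex.neg_pi_lt_arg (g a - g v)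
    have hhi := Complex.arg_le_pi (g a - g v)
    rw [Finset.mem_Icc]
    simp only [hbucket]
    have hpos : 0 < (((g a - g v).arg + Real.pi) * 3) / Real.pi :=
      div_pos (by nlinarith) hpi
    have c1 : 0 < ⌈(((g a - g v).arg + Real.pi) * 3) / Real.pi⌉ := Int.ceil_pos.mpr hpos
    have c2 : ⌈(((g a - g v).arg + Real.pi) * 3) / Real.pi⌉ ≤ 6 := by
      apply Int.ceil_le.mpr
      rw [div_le_iff₀ hpi]
      push_cast
      nlinarith
    omega
  -- bucket is injective on the neighbours
  have hinj : Set.InjOn bucket hfin.toFinset := by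
    intro a ha b hb hab2
    by_contra hab
    rw [Set.Finite.coe_toFinset] at ha hb
    have na : Nbr T a v := ha
    have nb : Nbr T b v := hb
    set za := g a - g v with hza
    set zb := g b - g v with hzb
    have pa : 0 < ‖za‖ := by
      rw [← hdist]
      exact dist_pos.mpr fun h => na.1 (hf h)
    have pb : 0 < ‖zb‖ := by
      rw [← hdist]
      exact dist_pos.mpr fun h => nb.1 (hf h)
    have h1 : ‖za‖ ≤ ‖za - zb‖ := by
      have := mst_le f T hmst na nb hab
      rw [hdist, hdist] at this
      have e : g a - g b = za - zb := by rw [hza, hzb]; ring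
      rwa [e] at this
    have h2 : ‖zb‖ ≤ ‖za - zb‖ := by
      have := mst_le f T hmst nb na (Ne.symm hab)
      rw [hdist, hdist] at this
      have e : g b - g a = -(za - zb) := by rw [hza, hzb]; ring
      rw [e] at this
      rwa [norm_neg] at this
    have hinner := inner_le_of_dist za zb h1 h2
    have hre := re_mul_conj za zb
    -- same bucket gives close angles
    set ta := ((za.arg + Real.pi) * 3) / Real.pi with hta
    set tb := ((zb.arg + Real.pi) * 3) / Real.pi with htb
    have hceil : ⌈ta⌉ = ⌈tb⌉ := hab2
    have l1 : ta ≤ (⌈ta⌉ : ℝ) := Int.le_ceil ta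
    have l2 : ((⌈ta⌉ : ℤ) : ℝ) < ta + 1 := Int.ceil_lt_add_one ta
    have l3 : tb ≤ (⌈tb⌉ : ℝ) := Int.le_ceil tb
    have l4 : ((⌈tb⌉ : ℤ) : ℝ) < tb + 1 := Int.ceil_lt_add_one tb
    rw [hceil] at l1 l2
    have hclose : |za.arg - zb.arg| < Real.pi / 3 := by
      rw [abs_lt]
      have e1 : za.arg = ta * Real.pi / 3 - Real.pi := by
        rw [hta]; field_simp; ring
      have e2 : zb.arg = tb * Real.pi / 3 - Real.pi := by
        rw [htb]; field_simp; ring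
      constructor <;> nlinarith
    have hcos := cos_gt_half _ hclose
    nlinarith [mul_pos pa pb, mul_pos (sub_pos.mpr hcos) (mul_pos pa pb)]
  calc hfin.toFinset.card ≤ (Finset.Icc (1 : ℤ) 6).card :=
        Finset.card_le_card_of_injOn bucket hmem hinj
    _ = 6 := by decide
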